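/- For each fixed positive integer L, the function f(p, L) converges pointwise as p → 0⁺ to Σ_{l=1}^{L} 4/(4l² − 1). -/

import Mathlib

open MeasureTheory Filter

/-- The Bernoulli(p) measure on `Bool`: `true` has probability `p`. -/
noncomputable def bern (p : ℝ) : Measure Bool :=
  ENNReal.ofReal p • Measure.dirac true + ENNReal.ofReal (1 - p) • Measure.dirac false

/-- The law of a random subset of `{0, …, N}` where each element is included
independently with probability `p`, encoded by indicator functions. -/
noncomputable def prodBern (p : ℝ) (N : ℕ) : Measure (Fin (N + 1) → Bool) :=
  Measure.pi fun _ => bern p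

/-- `n` belongs to the sumset `A + A`, where `A ⊆ {0,…,N}` is encoded by `ω`. -/
def inSumset {N : ℕ} (ω : Fin (N + 1) → Bool) (n : ℕ) : Prop :=
  ∃ a b : Fin (N + 1), ω a = true ∧ ω b = true ∧ (a : ℕ) + (b : ℕ) = n

/-- `Y`: the number of integers in `{0,…,N}` missing from `A + A`. -/
noncomputable def Ycount (N : ℕ) (ω : Fin (N + 1) → Bool) : ℕ :=
  {n : ℕ | n ≤ N ∧ ¬ inSumset ω n}.ncard

/-- `Z`: the number of integers in `{N+1,…,2N}` missing from `A + A`. -/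
noncomputable def Zcount (N : ℕ) (ω : Fin (N + 1) → Bool) : ℕ :=
  {n : ℕ | N + 1 ≤ n ∧ n ≤ 2 * N ∧ ¬ inSumset ω n}.ncard

/-- `W`: the number of integers in `{0,…,2N}` missing from `A + A`. -/
noncomputable def Wcount (N : ℕ) (ω : Fin (N + 1) → Bool) : ℕ :=
  {n : ℕ | n ≤ 2 * N ∧ ¬ inSumset ω n}.ncard

/-- `Ỹ`: the number of integers in `{0,…,⌊N/2⌋}` missing from `A + A`. -/
noncomputable def Ytilde (N : ℕ) (ω : Fin (N + 1) → Bool) : ℕ :=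
  {n : ℕ | n ≤ N / 2 ∧ ¬ inSumset ω n}.ncard

/-- `Z̃`: the number of integers in `{⌊3N/2⌋+1,…,2N}` missing from `A + A`. -/
noncomputable def Ztilde (N : ℕ) (ω : Fin (N + 1) → Bool) : ℕ :=
  {n : ℕ | 3 * N / 2 + 1 ≤ n ∧ n ≤ 2 * N ∧ ¬ inSumset ω n}.ncard

/-- A string of `k` bits has no two consecutive ones. -/
def noTwoOnes {k : ℕ} (x : Fin k → Bool) : Prop :=
  ∀ i : ℕ, ∀ hi : i + 1 < k, ¬(x ⟨i, Nat.lt_of_succ_lt hi⟩ = true ∧ x ⟨i + 1, hi⟩ = true)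

/-- `a_k`: the probability that `k` i.i.d. Bernoulli(p) bits contain no two
consecutive 1's (with `a_0 = 1`). -/
noncomputable def aseq (p : ℝ) (k : ℕ) : ℝ :=
  ((Measure.pi fun _ : Fin k => bern p) {x | noTwoOnes x}).toReal

noncomputable def ones {k : ℕ} (x : Fin k → Bool) : ℕ :=
  (Finset.univ.filter (fun i => x i = true)).card

noncomputable def Fp (p : ℝ) {k : ℕ} (x : Fin k → Bool) : ℝ :=
  p ^ ones x * (1 - p) ^ (k - ones x)

lemma measurableSet_all {k : ℕ} (s : Set (Fin k → Bool)) : MeasurableSet s := by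
  measurability

lemma bern_true (p : ℝ) : bern p {true} = ENNReal.ofReal p := by
  simp [bern, Measure.dirac_apply]

lemma bern_false (p : ℝ) : bern p {false} = ENNReal.ofReal (1 - p) := by
  simp [bern, Measure.dirac_apply]

lemma bern_prob (p : ℝ) (hp : 0 ≤ p) (hp1 : p ≤ 1) : IsProbabilityMeasure (bern p) := by
  constructor
  simp [bern, Measure.dirac_apply]
  rw [← ENNReal.ofReal_add hp (by linarith), ← ENNReal.ofReal_one]
  norm_num

open Classical in
lemma pi_singleton (p : ℝ) (hp : 0 ≤ p) (hp1 : p ≤ 1) {k : ℕ} (x : Fin k → Bool) :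
    (Measure.pi fun _ : Fin k => bern p) {x} = ENNReal.ofReal (Fp p x) := by
  haveI := bern_prob p hp hp1
  have h1 : ({x} : Set (Fin k → Bool)) = Set.univ.pi (fun i => {x i}) := by
    ext y; simp [funext_iff]
  rw [h1, Measure.pi_pi]
  have h2 : ∀ i : Fin k, bern p {x i} = ENNReal.ofReal (if x i then p else 1 - p) := by
    intro i; cases h : x i <;> simp [bern_true, bern_false]
  simp_rw [h2]
  rw [← ENNReal.ofReal_prod_of_nonneg (by intro i _; split <;> [exact hp; linarith])]
  congr 1
  rw [Fp, ← Finset.prod_filter_mul_prod_filter_not Finset.univ (fun i => x i = true)]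
  congr 1
  · have h3 : ∀ i ∈ Finset.univ.filter (fun i => x i = true),
        (if x i then p else 1 - p) = p := by
      intro i hi; simp only [Finset.mem_filter] at hi; simp [hi.2]
    rw [Finset.prod_congr rfl h3, Finset.prod_const, ones]
  · have h3 : ∀ i ∈ Finset.univ.filter (fun i => ¬ x i = true),
        (if x i then p else 1 - p) = 1 - p := by
      intro i hi; simp only [Finset.mem_filter] at hi; simp [hi.2]
    rw [Finset.prod_congr rfl h3, Finset.prod_const]
    congr 1
    have h4 := Finset.card_filter_add_card_filter_not (s := (Finset.univ : Finset (Fin k)))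
      (p := fun i => x i = true)
    simp only [Finset.card_univ, Fintype.card_fin] at h4
    have h5 : ones x ≤ k := by
      rw [ones]; calc (Finset.univ.filter (fun i => x i = true)).card
          ≤ (Finset.univ : Finset (Fin k)).card := Finset.card_filter_le _ _
        _ = k := by simp
    rw [ones] at *
    omega

open Classical in
lemma measure_finset (p : ℝ) (hp : 0 ≤ p) (hp1 : p ≤ 1) {k : ℕ} (s : Finset (Fin k → Bool)) :
    ((Measure.pi fun _ : Fin k => bern p) ↑s).toReal = ∑ x ∈ s, Fp p x := by
  have h := sum_measure_preimage_singleton (μ := Measure.pi fun _ : Fin k => bern p) s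
    (f := id) (fun y _ => measurableSet_all _)
  simp only [Set.preimage_id] at h
  rw [← h, ENNReal.toReal_sum (by intro x _; simp [pi_singleton p hp hp1])]
  refine Finset.sum_congr rfl fun x _ => by
    rw [pi_singleton p hp hp1]
    exact ENNReal.toReal_ofReal (mul_nonneg (pow_nonneg hp _) (pow_nonneg (by linarith) _))

open Classical in
lemma aseq_eq_sum (p : ℝ) (hp : 0 ≤ p) (hp1 : p ≤ 1) (k : ℕ) :
    aseq p k = ∑ x ∈ Finset.univ.filter (fun x : Fin k → Bool => noTwoOnes x), Fp p x := by
  rw [aseq, ← measure_finset p hp hp1]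
  congr 2
  ext y; simp

open Classical in
lemma one_sub_aseq_eq_sum (p : ℝ) (hp : 0 ≤ p) (hp1 : p ≤ 1) (k : ℕ) :
    1 - aseq p k = ∑ x ∈ Finset.univ.filter (fun x : Fin k → Bool => ¬ noTwoOnes x), Fp p x := by
  haveI := bern_prob p hp hp1
  haveI : IsProbabilityMeasure (Measure.pi fun _ : Fin k => bern p) := by infer_instance
  have hc : ({x : Fin k → Bool | noTwoOnes x})ᶜ =
      ↑(Finset.univ.filter (fun x : Fin k → Bool => ¬ noTwoOnes x)) := by
    ext y; simp
  rw [← measure_finset p hp hp1, ← hc, aseq,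
    prob_compl_eq_one_sub (measurableSet_all _), ENNReal.toReal_sub_of_le prob_le_one ENNReal.one_ne_top]
  simp

def ebad (n : ℕ) (k : ℕ) : Fin k → Bool := fun j => ((j : ℕ) == n) || ((j : ℕ) == n + 1)

open Classical in
lemma count_bad (k : ℕ) :
    ((Finset.univ : Finset (Fin k → Bool)).filter
      (fun x => ¬ noTwoOnes x ∧ ones x = 2)).card = k - 1 := by
  rw [← Finset.card_range (k-1)]
  symm
  apply Finset.card_nbij (fun n => ebad n k)
  · intro n hn
    simp only [Finset.coe_range, Set.mem_Iio, Finset.mem_range] at hn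
    have hnk : n + 1 < k := by omega
    have hfilter : Finset.univ.filter (fun j : Fin k => ebad n k j = true) =
        {⟨n, by omega⟩, ⟨n+1, hnk⟩} := by
      ext j
      simp only [Finset.mem_filter, Finset.mem_univ, true_and, ebad, Bool.or_eq_true,
        beq_iff_eq, Finset.mem_insert, Finset.mem_singleton, Fin.ext_iff]
    refine Finset.mem_filter.2 ⟨Finset.mem_univ _, ?_, ?_⟩
    · intro hno
      exact hno n hnk ⟨by simp [ebad], by simp [ebad]⟩
    · rw [ones]
      rw [show (Finset.univ.filter fun j : Fin k => ebad n k j = true) =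
        Finset.univ.filter (fun j : Fin k => ebad n k j = true) from rfl, hfilter]
      rw [Finset.card_insert_of_notMem (by simp [Fin.ext_iff]), Finset.card_singleton]
  · intro n hn m hm h
    simp only [Finset.coe_range, Set.mem_Iio] at hn hm
    have h1 := congrFun h ⟨n, by omega⟩
    have h2 := congrFun h ⟨m, by omega⟩
    simp only [ebad, beq_self_eq_true, Bool.true_or, beq_iff_eq, Bool.or_eq_true,
      eq_comm] at h1 h2
    rcases (by simpa [ebad] using h1.symm : (n = m ∨ n = m + 1)) with h' | h'
    · exact h'
    · rcases (by simpa [ebad] using h2 : (m = n ∨ m = n + 1)) with h'' | h'' <;> omega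
  · intro x hx
    simp only [Finset.coe_filter, Set.mem_setOf_eq, Finset.mem_univ, true_and] at hx
    obtain ⟨hbad, hones⟩ := hx
    rw [noTwoOnes] at hbad
    push_neg at hbad
    obtain ⟨i, hi, hx1, hx2⟩ := hbad
    refine ⟨i, by simp only [Finset.coe_range, Set.mem_Iio]; omega, ?_⟩
    have hsub : ({⟨i, by omega⟩, ⟨i+1, hi⟩} : Finset (Fin k)) ⊆
        Finset.univ.filter (fun j : Fin k => x j = true) := by
      intro j hj
      simp only [Finset.mem_insert, Finset.mem_singleton] at hj
      rcases hj with rfl | rfl <;> simp [hx1, hx2]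
    have hcard2 : ({⟨i, by omega⟩, ⟨i+1, hi⟩} : Finset (Fin k)).card = 2 := by
      rw [Finset.card_insert_of_notMem (by simp [Fin.ext_iff]), Finset.card_singleton]
    have heq : ({⟨i, by omega⟩, ⟨i+1, hi⟩} : Finset (Fin k)) =
        Finset.univ.filter (fun j : Fin k => x j = true) := by
      apply Finset.eq_of_subset_of_card_le hsub
      rw [hcard2]
      exact le_of_eq hones
    funext j
    rw [Bool.eq_iff_iff]
    have hj : x j = true ↔ j ∈ Finset.univ.filter (fun j : Fin k => x j = true) := by simp
    rw [show (ebad i k j = true) ↔ ((j:ℕ) = i ∨ (j:ℕ) = i + 1) by simp [ebad], hj, ← heq]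
    simp [Fin.ext_iff]

lemma eventually_Ioo : ∀ᶠ p : ℝ in nhdsWithin 0 (Set.Ioi 0), p ∈ Set.Ioo (0:ℝ) 1 := by
  filter_upwards [Ioo_mem_nhdsGT_of_mem (by norm_num : (0:ℝ) ∈ Set.Ico (0:ℝ) 1)] with p hp
  exact hp

open Classical in
lemma tendsto_sum_Fp (k : ℕ) (s : Finset (Fin k → Bool)) :
    Filter.Tendsto (fun p : ℝ => ∑ x ∈ s, Fp p x) (nhds 0)
      (nhds ((s.filter (fun x => ones x = 0)).card : ℝ)) := by
  have h1 : ((s.filter (fun x => ones x = 0)).card : ℝ)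
      = ∑ x ∈ s, (if ones x = 0 then (1:ℝ) else 0) := by
    rw [Finset.sum_boole]
  rw [h1]
  apply tendsto_finset_sum
  intro x _
  have hc : Continuous (fun p : ℝ => Fp p x) := by
    unfold Fp
    fun_prop
  have := hc.tendsto 0
  convert this using 1
  unfold Fp
  rw [zero_pow_eq]
  simp

open Classical in
lemma tendsto_sum_Fp_div (k : ℕ) (s : Finset (Fin k → Bool)) (hs : ∀ x ∈ s, 2 ≤ ones x) :
    Filter.Tendsto (fun p : ℝ => ∑ x ∈ s, Fp p x / p ^ 2) (nhdsWithin 0 (Set.Ioi 0))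
      (nhds ((s.filter (fun x => ones x = 2)).card : ℝ)) := by
  have h1 : ((s.filter (fun x => ones x = 2)).card : ℝ)
      = ∑ x ∈ s, (if ones x = 2 then (1:ℝ) else 0) := by
    rw [Finset.sum_boole]
  have key : Filter.Tendsto (fun p : ℝ => ∑ x ∈ s, p ^ (ones x - 2) * (1-p) ^ (k - ones x))
      (nhds 0) (nhds ((s.filter (fun x => ones x = 2)).card : ℝ)) := by
    rw [h1]
    apply tendsto_finset_sum
    intro x hx
    have hc : Continuous (fun p : ℝ => p ^ (ones x - 2) * (1-p) ^ (k - ones x)) := by fun_prop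
    have := hc.tendsto 0
    convert this using 1
    rw [zero_pow_eq]
    have := hs x hx
    rcases Nat.eq_or_lt_of_le this with h | h
    · simp [← h]
    · have : ones x - 2 ≠ 0 := by omega
      simp [this]
      omega
  apply Filter.Tendsto.congr' _ (key.mono_left nhdsWithin_le_nhds)
  filter_upwards [eventually_Ioo] with p hp
  apply Finset.sum_congr rfl
  intro x hx
  rw [Fp]
  have h2 : ones x = 2 + (ones x - 2) := by have := hs x hx; omega
  have hp0 : p ≠ 0 := ne_of_gt hp.1
  rw [h2, pow_add]
  field_simp
  ring_nf
  simp only [Nat.add_sub_cancel_left]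

open Classical in
lemma tendsto_aseq (k : ℕ) :
    Filter.Tendsto (fun p : ℝ => aseq p k) (nhdsWithin 0 (Set.Ioi 0)) (nhds 1) := by
  have hS : ((Finset.univ.filter (fun x : Fin k → Bool => noTwoOnes x)).filter
      (fun x => ones x = 0)).card = 1 := by
    have : (Finset.univ.filter (fun x : Fin k → Bool => noTwoOnes x)).filter
        (fun x => ones x = 0) = {fun _ => false} := by
      ext x
      simp only [Finset.mem_filter, Finset.mem_univ, true_and, Finset.mem_singleton]
      constructor
      · rintro ⟨-, h0⟩
        funext i
        by_contra hxi
        rw [Bool.not_eq_false] at hxi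
        have hxi' : x i = true := hxi
        have : i ∈ Finset.univ.filter (fun i => x i = true) := by simp [hxi']
        rw [ones, Finset.card_eq_zero] at h0
        simp [h0] at this
      · rintro rfl
        refine ⟨fun i hi => by simp, ?_⟩
        rw [ones, Finset.card_eq_zero]
        ext i; simp
    rw [this, Finset.card_singleton]
  have := (tendsto_sum_Fp k (Finset.univ.filter (fun x : Fin k → Bool => noTwoOnes x))).mono_left
    (nhdsWithin_le_nhds (s := Set.Ioi (0:ℝ)))
  rw [hS] at this
  apply Filter.Tendsto.congr' _ (by exact_mod_cast this)
  filter_upwards [eventually_Ioo] with p hp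
  exact (aseq_eq_sum p (le_of_lt hp.1) (le_of_lt hp.2) k).symm

lemma bad_two_le {k : ℕ} (x : Fin k → Bool) (hx : ¬ noTwoOnes x) : 2 ≤ ones x := by
  rw [noTwoOnes] at hx
  push_neg at hx
  obtain ⟨i, hi, hx1, hx2⟩ := hx
  have hsub : ({⟨i, by omega⟩, ⟨i+1, hi⟩} : Finset (Fin k)) ⊆
      Finset.univ.filter (fun j : Fin k => x j = true) := by
    intro j hj
    simp only [Finset.mem_insert, Finset.mem_singleton] at hj
    rcases hj with rfl | rfl <;> simp [hx1, hx2]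
  have h2 : ({⟨i, by omega⟩, ⟨i+1, hi⟩} : Finset (Fin k)).card = 2 := by
    rw [Finset.card_insert_of_notMem (by simp [Fin.ext_iff]), Finset.card_singleton]
  rw [ones, ← h2]
  exact Finset.card_le_card hsub

open Classical in
lemma tendsto_one_sub_div (k : ℕ) (hk : 1 ≤ k) :
    Filter.Tendsto (fun p : ℝ => (1 - aseq p k) / p ^ 2) (nhdsWithin 0 (Set.Ioi 0))
      (nhds ((k : ℝ) - 1)) := by
  have hcard : (((Finset.univ.filter (fun x : Fin k → Bool => ¬ noTwoOnes x)).filter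
      (fun x => ones x = 2)).card : ℝ) = (k : ℝ) - 1 := by
    rw [Finset.filter_filter]
    rw [show ((Finset.univ : Finset (Fin k → Bool)).filter
        (fun x => ¬ noTwoOnes x ∧ ones x = 2)).card = k - 1 from count_bad k]
    push_cast [Nat.cast_sub hk]
    ring
  have := tendsto_sum_Fp_div k (Finset.univ.filter (fun x : Fin k → Bool => ¬ noTwoOnes x))
    (fun x hx => bad_two_le x (by simpa using hx))
  rw [hcard] at this
  apply Filter.Tendsto.congr' _ this
  filter_upwards [eventually_Ioo] with p hp
  rw [← Finset.sum_div, ← one_sub_aseq_eq_sum p (le_of_lt hp.1) (le_of_lt hp.2) k]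


/-- The partial sums `f(p, L)` of `p⁴` times the series for the second moment. -/
noncomputable def fPL (p : ℝ) (L : ℕ) : ℝ :=
  ∑ l ∈ Finset.range L,
    p ^ 4 * (aseq p (2 * (l + 1)) + (1 - p) * aseq p l +
        (1 - p) * aseq p (l + 1) * aseq p (2 * (l + 1)) +
        (1 - p) ^ 2 * aseq p (l + 1) * aseq p l) /
      ((1 - aseq p (2 * (l + 1) + 2)) * (1 - aseq p (2 * (l + 1))))

/-- For each fixed `L`, `f(p, L) → Σ_{l=1}^{L} 4/(4l² - 1)` as `p → 0⁺`. -/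
theorem stmt18 (L : ℕ) (hL : 1 ≤ L) :
    Filter.Tendsto (fun p : ℝ => fPL p L) (nhdsWithin 0 (Set.Ioi 0))
      (nhds (∑ l ∈ Finset.range L, 4 / (4 * ((l : ℝ) + 1) ^ 2 - 1))) := by
  unfold fPL
  apply tendsto_finset_sum
  intro l _
  set lfil := nhdsWithin (0:ℝ) (Set.Ioi 0) with hlfil
  have hone : Filter.Tendsto (fun p : ℝ => 1 - p) lfil (nhds 1) := by
    have : Filter.Tendsto (fun p : ℝ => 1 - p) (nhds 0) (nhds (1 - 0)) :=
      (continuous_const.sub continuous_id).tendsto 0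
    simpa using this.mono_left nhdsWithin_le_nhds
  have hN : Filter.Tendsto (fun p : ℝ => aseq p (2 * (l + 1)) + (1 - p) * aseq p l +
      (1 - p) * aseq p (l + 1) * aseq p (2 * (l + 1)) +
      (1 - p) ^ 2 * aseq p (l + 1) * aseq p l) lfil (nhds 4) := by
    have h := (((tendsto_aseq (2*(l+1))).add (hone.mul (tendsto_aseq l))).add
      ((hone.mul (tendsto_aseq (l+1))).mul (tendsto_aseq (2*(l+1))))).add
      (((hone.pow 2).mul (tendsto_aseq (l+1))).mul (tendsto_aseq l))
    norm_num at h
    exact h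
  have hD1 := tendsto_one_sub_div (2*(l+1)+2) (by omega)
  have hD2 := tendsto_one_sub_div (2*(l+1)) (by omega)
  have hval1 : ((2*(l+1)+2 : ℕ) : ℝ) - 1 = 2*(l:ℝ) + 3 := by push_cast; ring
  have hval2 : ((2*(l+1) : ℕ) : ℝ) - 1 = 2*(l:ℝ) + 1 := by push_cast; ring
  rw [hval1] at hD1
  rw [hval2] at hD2
  have hne : (2*(l:ℝ) + 3) * (2*(l:ℝ) + 1) ≠ 0 := by positivity
  have hmain := hN.div (hD1.mul hD2) hne
  have hlim : (4 : ℝ) / ((2*(l:ℝ) + 3) * (2*(l:ℝ) + 1)) = 4 / (4 * ((l : ℝ) + 1) ^ 2 - 1) := by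
    congr 1
    ring
  rw [hlim] at hmain
  apply Filter.Tendsto.congr' _ hmain
  filter_upwards [eventually_Ioo] with p hp
  have hp0 : p ≠ 0 := ne_of_gt hp.1
  simp only [Pi.div_apply]
  rw [div_mul_div_comm, div_div_eq_mul_div]
  ring
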